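/- For every λ ≥ 0, every A ⊆ ℕ and every natural number n ≥ 1, the Stein–Chen function satisfies g(n,λ,A) = (n−1)!·(λ⁻¹)^n·e^{λ}·F(n−1,λ,A) + (1/n)·1_{λ=0}·(Po(A;λ) − 1_A(n)), where F(m,λ,A) := Po(A ∩ {0,…,m}; λ) − Po(A;λ)·Po({0,…,m}; λ). -/

import Mathlib

open scoped BigOperators

/-- Poisson pmf: Po(k;lam) = lam^k * e^(-lam) / k!  (with the convention 0^0 = 1). -/
noncomputable def Po (k : ℕ) (lam : ℝ) : ℝ := lam ^ k * Real.exp (-lam) / (Nat.factorial k)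

/-- Poisson measure of a set A of naturals: Po(A;lam) = sum over k in A of Po(k;lam). -/
noncomputable def PoSet (A : Set ℕ) (lam : ℝ) : ℝ := ∑' k : A, Po k lam

/-- The scalar Stein-Chen solution g(j,lam,A), defined recursively by g(0,lam,A) = 0 and
g(j,lam,A) = lam⁻¹ * ((j-1)*g(j-1,lam,A) + 1_A(j-1) - Po(A;lam))
             + (1/j) * 1_{lam=0} * (1_A(0) - 1_A(j)) for j ≥ 1,
with the convention 0⁻¹ = 0. -/
noncomputable def steinChen : ℕ → ℝ → Set ℕ → ℝ
  | 0, _, _ => 0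
  | (j + 1), lam, A =>
      lam⁻¹ * ((j : ℝ) * steinChen j lam A
          + A.indicator (fun _ => (1 : ℝ)) j - PoSet A lam)
        + (1 / ((j : ℝ) + 1)) * (if lam = 0 then (1 : ℝ) else 0)
          * (A.indicator (fun _ => (1 : ℝ)) 0 - A.indicator (fun _ => (1 : ℝ)) (j + 1))

/-- Explicit formula for the Stein-Chen solution: for lam ≥ 0, A ⊆ ℕ and n ≥ 1,
g(n,lam,A) = (n-1)! * (lam⁻¹)^n * e^lam * F(n-1,lam,A)
             + (1/n) * 1_{lam=0} * (Po(A;lam) - 1_A(n)),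
where F(m,lam,A) = Po(A ∩ {0,...,m};lam) - Po(A;lam) * Po({0,...,m};lam). -/

lemma indicator_Po (A : Set ℕ) (k : ℕ) (lam : ℝ) :
    A.indicator (fun k => Po k lam) k = A.indicator (fun _ => (1 : ℝ)) k * Po k lam := by
  by_cases h : k ∈ A <;> simp [h]

lemma poSet_inter_Iic (A : Set ℕ) (m : ℕ) (lam : ℝ) :
    PoSet (A ∩ Set.Iic m) lam
      = ∑ k ∈ Finset.range (m + 1), A.indicator (fun k => Po k lam) k := by
  rw [PoSet, tsum_subtype (A ∩ Set.Iic m) (fun k => Po k lam)]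
  rw [tsum_eq_sum (s := Finset.range (m + 1))
    (by
      intro k hk
      simp only [Finset.mem_range, Nat.lt_succ_iff, not_le] at hk
      simp [Set.indicator_apply, Set.mem_inter_iff, Set.mem_Iic, not_le.mpr hk])]
  refine Finset.sum_congr rfl ?_
  intro k hk
  simp only [Finset.mem_range, Nat.lt_succ_iff] at hk
  by_cases h : k ∈ A <;>
    simp [Set.indicator_apply, Set.mem_inter_iff, Set.mem_Iic, hk, h]

lemma poSet_Iic (m : ℕ) (lam : ℝ) :
    PoSet (Set.Iic m) lam = ∑ k ∈ Finset.range (m + 1), Po k lam := by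
  have h := poSet_inter_Iic Set.univ m lam
  simpa [Set.univ_inter] using h

lemma poSet_zero (A : Set ℕ) :
    PoSet A 0 = A.indicator (fun _ => (1 : ℝ)) 0 := by
  rw [PoSet, tsum_subtype A (fun k => Po k 0), tsum_eq_single 0]
  · by_cases h : (0 : ℕ) ∈ A <;> simp [h, Po]
  · intro k hk
    by_cases h : k ∈ A <;> simp [h, Po, zero_pow hk]

theorem steinChen_explicit_formula (lam : ℝ) (hlam : 0 ≤ lam) (A : Set ℕ)
    (n : ℕ) (hn : 1 ≤ n) :
    steinChen n lam A =
      ((n - 1).factorial : ℝ) * (lam⁻¹) ^ n * Real.exp lam *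
        (PoSet (A ∩ Set.Iic (n - 1)) lam - PoSet A lam * PoSet (Set.Iic (n - 1)) lam)
      + (1 / (n : ℝ)) * (if lam = 0 then (1 : ℝ) else 0) *
          (PoSet A lam - A.indicator (fun _ => (1 : ℝ)) n) := by
  by_cases h0 : lam = 0
  · subst h0
    obtain ⟨j, rfl⟩ : ∃ j, n = j + 1 := ⟨n - 1, (Nat.succ_pred_eq_of_pos hn).symm⟩
    simp only [steinChen, if_true, inv_zero, zero_mul, zero_add, poSet_zero]
    rw [zero_pow (Nat.succ_ne_zero j)]
    push_cast
    ring
  · simp only [h0, if_false, mul_zero, zero_mul, add_zero]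
    induction n, hn using Nat.le_induction with
    | base =>
      simp only [steinChen, h0, if_false, mul_zero, zero_mul, add_zero, Nat.cast_zero,
        Nat.sub_self, Nat.factorial_zero, Nat.cast_one, pow_one]
      rw [poSet_inter_Iic, poSet_Iic]
      simp only [zero_add, Finset.sum_range_one]
      rw [indicator_Po]
      simp only [Po, pow_zero, Nat.factorial_zero, Nat.cast_one, one_mul, div_one,
        Real.exp_neg]
      have hexp := Real.exp_ne_zero lam
      field_simp
    | succ n hn ih =>
      obtain ⟨m, rfl⟩ : ∃ m, n = m + 1 := ⟨n - 1, (Nat.succ_pred_eq_of_pos hn).symm⟩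
      have e1 : PoSet (A ∩ Set.Iic (m + 1)) lam
          = PoSet (A ∩ Set.Iic m) lam + A.indicator (fun k => Po k lam) (m + 1) := by
        rw [poSet_inter_Iic, poSet_inter_Iic, Finset.sum_range_succ]
      have e2 : PoSet (Set.Iic (m + 1)) lam
          = PoSet (Set.Iic m) lam + Po (m + 1) lam := by
        rw [poSet_Iic, poSet_Iic, Finset.sum_range_succ]
      simp only [Nat.add_sub_cancel] at ih ⊢
      show lam⁻¹ * (((m + 1 : ℕ) : ℝ) * steinChen (m + 1) lam A
            + A.indicator (fun _ => (1 : ℝ)) (m + 1) - PoSet A lam)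
          + (1 / (((m + 1 : ℕ) : ℝ) + 1)) * (if lam = 0 then (1 : ℝ) else 0)
            * (A.indicator (fun _ => (1 : ℝ)) 0 - A.indicator (fun _ => (1 : ℝ)) (m + 1 + 1)) = _
      rw [ih, e1, e2, indicator_Po A (m + 1)]
      simp only [h0, if_false, mul_zero, zero_mul, add_zero, Po, Real.exp_neg,
        Nat.factorial_succ]
      have hexp := Real.exp_ne_zero lam
      have hfac : ((m + 1).factorial : ℝ) ≠ 0 := by exact_mod_cast (m + 1).factorial_ne_zero
      have hl : lam ≠ 0 := h0
      field_simp
      simp only [one_div, inv_pow]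
      field_simp
      push_cast
      ring
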